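/- arXiv:2304.09401 — 3 statements merged into one kernel-verified Lean document; each statement's English description precedes it below -/
import Mathlib

section
/- Let ρ be a density matrix written in block form with respect to a projection Π as ρ = [[A, B],[B†, D]], where A = ΠρΠ, D = (I−Π)ρ(I−Π), B = Πρ(I−Π). Let W = Tr[D] and λ = ‖(√A)^g B (√D)^g‖_∞, where (·)^g denotes the Moore–Penrose generalized inverse. Then the trace norm of the off-diagonal block satisfies ‖B‖₁ ≤ λ√W. -/
open Matrix ComplexOrder

/-- The positive semidefinite square root of a positive semidefinite matrix
(the definition `Matrix.PosSemidef.sqrt` of the older Mathlib, removed since). -/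
noncomputable def Matrix.PosSemidef.sqrt {n 𝕜 : Type*} [Fintype n] [DecidableEq n] [RCLike 𝕜]
    {A : Matrix n n 𝕜} (hA : A.PosSemidef) : Matrix n n 𝕜 :=
  (hA.1.eigenvectorUnitary : Matrix n n 𝕜) *
    diagonal (fun i => ((Real.sqrt (hA.1.eigenvalues i) : ℝ) : 𝕜)) *
    (star hA.1.eigenvectorUnitary : Matrix n n 𝕜)

/-- The trace norm `‖A‖₁ = Tr √(AᴴA)` of a complex matrix. -/
noncomputable def traceNorm {d : ℕ} (A : Matrix (Fin d) (Fin d) ℂ) : ℝ :=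
  ((Matrix.posSemidef_conjTranspose_mul_self A).sqrt).trace.re

/-- The operator (spectral) norm `‖A‖_∞` of a complex matrix. -/
noncomputable def opNorm {d : ℕ} (A : Matrix (Fin d) (Fin d) ℂ) : ℝ :=
  ‖Matrix.toEuclideanCLM (𝕜 := ℂ) A‖

set_option synthInstance.maxHeartbeats 1000000
set_option maxHeartbeats 1000000

lemma Matrix.PosSemidef.posSemidef_sqrt {n 𝕜 : Type*} [Fintype n] [DecidableEq n] [RCLike 𝕜]
    {A : Matrix n n 𝕜} (hA : A.PosSemidef) : hA.sqrt.PosSemidef := by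
  unfold Matrix.PosSemidef.sqrt
  have h : (diagonal (fun i => ((Real.sqrt (hA.1.eigenvalues i) : ℝ) : 𝕜))).PosSemidef :=
    PosSemidef.diagonal (fun i => RCLike.ofReal_nonneg.mpr (Real.sqrt_nonneg _))
  exact h.mul_mul_conjTranspose_same (hA.1.eigenvectorUnitary : Matrix n n 𝕜)

lemma Matrix.PosSemidef.sqrt_mul_self {n 𝕜 : Type*} [Fintype n] [DecidableEq n] [RCLike 𝕜]
    {A : Matrix n n 𝕜} (hA : A.PosSemidef) : hA.sqrt * hA.sqrt = A := by
  have hU := Unitary.coe_star_mul_self hA.1.eigenvectorUnitary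
  have hS : diagonal (fun i => ((Real.sqrt (hA.1.eigenvalues i) : ℝ) : 𝕜)) *
      diagonal (fun i => ((Real.sqrt (hA.1.eigenvalues i) : ℝ) : 𝕜)) =
      diagonal (RCLike.ofReal ∘ hA.1.eigenvalues) := by
    rw [diagonal_mul_diagonal]
    congr 1
    funext i
    simp only [Function.comp_apply, ← RCLike.ofReal_mul, Real.mul_self_sqrt (hA.eigenvalues_nonneg i)]
  unfold Matrix.PosSemidef.sqrt
  conv_rhs => rw [hA.1.spectral_theorem, Unitary.conjStarAlgAut_apply]
  calc _ = (hA.1.eigenvectorUnitary : Matrix n n 𝕜) *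
        (diagonal (fun i => ((Real.sqrt (hA.1.eigenvalues i) : ℝ) : 𝕜)) *
        ((star hA.1.eigenvectorUnitary : Matrix n n 𝕜) * hA.1.eigenvectorUnitary) *
        diagonal (fun i => ((Real.sqrt (hA.1.eigenvalues i) : ℝ) : 𝕜))) *
        (star hA.1.eigenvectorUnitary : Matrix n n 𝕜) := by simp only [mul_assoc]
    _ = _ := by rw [hU, mul_one, hS]

section Aux

variable {d : ℕ}

lemma re_diag_nonneg {S : Matrix (Fin d) (Fin d) ℂ} (hS : S.PosSemidef) (i : Fin d) :
    0 ≤ (S i i).re := by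
  have h := hS.re_dotProduct_nonneg (Pi.single i 1)
  have he : star (Pi.single i 1 : Fin d → ℂ) ⬝ᵥ S *ᵥ (Pi.single i 1) = S i i := by
    simp [Matrix.mulVec_single, dotProduct, Pi.single_apply, apply_ite, star, ite_mul,
      Finset.sum_ite_eq, Complex.ext_iff]
  rw [he] at h
  simpa using h

lemma re_trace_nonneg {S : Matrix (Fin d) (Fin d) ℂ} (hS : S.PosSemidef) :
    0 ≤ S.trace.re := by
  rw [Matrix.trace, Complex.re_sum]
  exact Finset.sum_nonneg fun i _ => re_diag_nonneg hS i

lemma trace_mul_proj_le {S Q : Matrix (Fin d) (Fin d) ℂ} (hS : S.PosSemidef)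
    (hQ1 : Qᴴ = Q) (hQ2 : Q * Q = Q) : (S * Q).trace.re ≤ S.trace.re := by
  have h1 : ((1 - Q) * S * (1 - Q)).PosSemidef := by
    have := hS.mul_mul_conjTranspose_same (1 - Q)
    rwa [conjTranspose_sub, conjTranspose_one, hQ1] at this
  have hproj : (1 - Q) * (1 - Q) = 1 - Q := by
    simp [mul_sub, sub_mul, hQ2]
  have h2 : ((1 - Q) * S * (1 - Q)).trace = S.trace - (S * Q).trace := by
    rw [Matrix.trace_mul_cycle, hproj, sub_mul, one_mul,
      Matrix.trace_sub, Matrix.trace_mul_comm]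
  have := re_trace_nonneg h1
  rw [h2, Complex.sub_re] at this
  linarith

lemma trace_conjTranspose_mul_self_re (G : Matrix (Fin d) (Fin d) ℂ) :
    (Gᴴ * G).trace.re = ∑ i, ∑ j, ‖G j i‖ ^ 2 := by
  rw [Matrix.trace, Complex.re_sum]
  refine Finset.sum_congr rfl fun i _ => ?_
  rw [Matrix.diag_apply, Matrix.mul_apply, Complex.re_sum]
  refine Finset.sum_congr rfl fun j _ => ?_
  rw [Matrix.conjTranspose_apply, Complex.star_def, Complex.sq_norm,
    ← Complex.normSq_eq_conj_mul_self, Complex.normSq_apply]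
  simp

lemma re_trace_conjTranspose_mul_le (G K : Matrix (Fin d) (Fin d) ℂ) :
    (Gᴴ * K).trace.re ≤
      Real.sqrt (Gᴴ * G).trace.re * Real.sqrt (Kᴴ * K).trace.re := by
  have h1 : (Gᴴ * K).trace.re ≤ ∑ i, ∑ j, ‖G j i‖ * ‖K j i‖ := by
    rw [Matrix.trace, Complex.re_sum]
    refine Finset.sum_le_sum fun i _ => ?_
    rw [Matrix.diag_apply, Matrix.mul_apply, Complex.re_sum]
    refine Finset.sum_le_sum fun j _ => ?_
    calc ((Gᴴ) i j * K j i).re ≤ ‖(Gᴴ) i j * K j i‖ := Complex.re_le_norm _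
      _ = ‖G j i‖ * ‖K j i‖ := by rw [norm_mul, Matrix.conjTranspose_apply, norm_star]
  have h2 : ∑ i, ∑ j, ‖G j i‖ * ‖K j i‖ ≤
      Real.sqrt (∑ i, ∑ j, ‖G j i‖ ^ 2) * Real.sqrt (∑ i, ∑ j, ‖K j i‖ ^ 2) := by
    rw [← Finset.sum_product', ← Finset.sum_product', ← Finset.sum_product']
    set s := (Finset.univ ×ˢ Finset.univ : Finset (Fin d × Fin d))
    have hcs := Finset.sum_mul_sq_le_sq_mul_sq s (fun p => ‖G p.2 p.1‖) (fun p => ‖K p.2 p.1‖)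
    have hnn : 0 ≤ ∑ p ∈ s, ‖G p.2 p.1‖ * ‖K p.2 p.1‖ :=
      Finset.sum_nonneg fun p _ => mul_nonneg (norm_nonneg _) (norm_nonneg _)
    calc ∑ p ∈ s, ‖G p.2 p.1‖ * ‖K p.2 p.1‖
        = Real.sqrt ((∑ p ∈ s, ‖G p.2 p.1‖ * ‖K p.2 p.1‖) ^ 2) := (Real.sqrt_sq hnn).symm
      _ ≤ Real.sqrt ((∑ p ∈ s, ‖G p.2 p.1‖ ^ 2) * (∑ p ∈ s, ‖K p.2 p.1‖ ^ 2)) :=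
          Real.sqrt_le_sqrt hcs
      _ = _ := Real.sqrt_mul (Finset.sum_nonneg fun p _ => sq_nonneg _) _
  rw [trace_conjTranspose_mul_self_re, trace_conjTranspose_mul_self_re]
  exact h1.trans h2

lemma traceNorm_eq_sum_sqrt (B : Matrix (Fin d) (Fin d) ℂ) :
    traceNorm B = ∑ i, Real.sqrt ((Matrix.posSemidef_conjTranspose_mul_self B).1.eigenvalues i) := by
  set hH := Matrix.posSemidef_conjTranspose_mul_self B
  have hU : (star (hH.1.eigenvectorUnitary : Matrix (Fin d) (Fin d) ℂ)) *
      (hH.1.eigenvectorUnitary : Matrix (Fin d) (Fin d) ℂ) = 1 :=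
    Unitary.coe_star_mul_self _
  have : hH.sqrt = (hH.1.eigenvectorUnitary : Matrix (Fin d) (Fin d) ℂ) *
      diagonal ((↑) ∘ Real.sqrt ∘ hH.1.eigenvalues) *
      (star hH.1.eigenvectorUnitary : Matrix (Fin d) (Fin d) ℂ) := rfl
  rw [traceNorm, this, Matrix.trace_mul_cycle, hU, one_mul,
    Matrix.trace_diagonal, Complex.re_sum]
  simp

lemma traceNorm_mul_le (X Y : Matrix (Fin d) (Fin d) ℂ) :
    traceNorm (X * Y) ≤ Real.sqrt (Xᴴ * X).trace.re * Real.sqrt (Yᴴ * Y).trace.re := by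
  classical
  set hH := Matrix.posSemidef_conjTranspose_mul_self (X * Y) with hHdef
  set U : Matrix (Fin d) (Fin d) ℂ := (hH.1.eigenvectorUnitary : Matrix (Fin d) (Fin d) ℂ)
    with hUdef
  set μ : Fin d → ℝ := hH.1.eigenvalues with hμdef
  have hμ0 : ∀ i, 0 ≤ μ i := fun i => hH.eigenvalues_nonneg i
  have hU1 : star U * U = 1 := Unitary.coe_star_mul_self _
  have hU2 : U * star U = 1 := Unitary.coe_mul_star_self _
  have hdiag : star U * ((X * Y)ᴴ * (X * Y)) * U = diagonal (fun i => (μ i : ℂ)) :=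
    by
      have h := hH.1.conjStarAlgAut_star_eigenvectorUnitary
      rw [Unitary.conjStarAlgAut_apply, Unitary.coe_star, star_star] at h
      exact h
  set D' : Matrix (Fin d) (Fin d) ℂ :=
    diagonal (fun i => if μ i = 0 then 0 else ((Real.sqrt (μ i) : ℂ))⁻¹) with hD'def
  set V := X * Y * U with hVdef
  have hVV : Vᴴ * V = diagonal (fun i => (μ i : ℂ)) := by
    rw [← hdiag, hVdef]
    simp only [conjTranspose_mul, Matrix.star_eq_conjTranspose, mul_assoc]
  set W := V * D' with hWdef
  set G := Xᴴ * W with hGdef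
  set K := Y * U with hKdef
  have hsq : ∀ i, μ i ≠ 0 → ((Real.sqrt (μ i) : ℂ)) ≠ 0 := fun i hi => by
    simp only [ne_eq, Complex.ofReal_eq_zero]
    exact Real.sqrt_ne_zero'.mpr (lt_of_le_of_ne (hμ0 i) (Ne.symm hi))
  have hμsqrt : ∀ i, ((μ i : ℂ)) = (Real.sqrt (μ i) : ℂ) * (Real.sqrt (μ i) : ℂ) := by
    intro i
    rw [← Complex.ofReal_mul, Real.mul_self_sqrt (hμ0 i)]
  have hGK : Gᴴ * K = diagonal (fun i => (Real.sqrt (μ i) : ℂ)) := by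
    have h1 : Gᴴ * K = D'ᴴ * (Vᴴ * V) := by
      simp only [hGdef, hWdef, hKdef, hVdef, conjTranspose_mul,
        conjTranspose_conjTranspose, mul_assoc]
    rw [h1, hVV, hD'def, Matrix.diagonal_conjTranspose, Matrix.diagonal_mul_diagonal]
    refine congrArg Matrix.diagonal (funext fun i => ?_)
    by_cases hi : μ i = 0
    · simp [hi]
    · simp only [Pi.star_apply, hi, if_false, if_neg]
      rw [Complex.star_def, map_inv₀, Complex.conj_ofReal, hμsqrt i]
      exact inv_mul_cancel_left₀ (hsq i hi) _
  have htr : traceNorm (X * Y) = (Gᴴ * K).trace.re := by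
    rw [traceNorm_eq_sum_sqrt, hGK, Matrix.trace_diagonal, Complex.re_sum]
    simp only [Complex.ofReal_re]
    rfl
  have hE : Wᴴ * W = diagonal (fun i => if μ i = 0 then 0 else (1 : ℂ)) := by
    have h1 : Wᴴ * W = D'ᴴ * ((Vᴴ * V) * D') := by
      simp only [hWdef, conjTranspose_mul, mul_assoc]
    rw [h1, hVV, hD'def, Matrix.diagonal_conjTranspose, Matrix.diagonal_mul_diagonal,
      Matrix.diagonal_mul_diagonal]
    refine congrArg Matrix.diagonal (funext fun i => ?_)
    by_cases hi : μ i = 0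
    · simp [hi]
    · simp only [Pi.star_apply, hi, if_false, if_neg]
      rw [Complex.star_def, map_inv₀, Complex.conj_ofReal, hμsqrt i]
      have h := hsq i hi
      field_simp
  have hWE : W * diagonal (fun i => if μ i = 0 then 0 else (1 : ℂ)) = W := by
    rw [hWdef, hD'def, mul_assoc, Matrix.diagonal_mul_diagonal]
    refine congrArg (V * ·) (congrArg Matrix.diagonal (funext fun i => ?_))
    by_cases hi : μ i = 0 <;> simp [hi]
  have hQ1 : (W * Wᴴ)ᴴ = W * Wᴴ := by simp [conjTranspose_mul]
  have hQ2 : (W * Wᴴ) * (W * Wᴴ) = W * Wᴴ := by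
    calc (W * Wᴴ) * (W * Wᴴ) = W * (Wᴴ * W) * Wᴴ := by simp only [mul_assoc]
      _ = W * Wᴴ := by rw [hE, hWE]
  have hG : (Gᴴ * G).trace.re ≤ (Xᴴ * X).trace.re := by
    have h1 : Gᴴ * G = Wᴴ * (X * Xᴴ) * W := by
      simp only [hGdef, conjTranspose_mul, conjTranspose_conjTranspose, mul_assoc]
    have h2 : (Wᴴ * (X * Xᴴ) * W).trace = ((X * Xᴴ) * (W * Wᴴ)).trace := by
      rw [Matrix.trace_mul_comm, ← mul_assoc, Matrix.trace_mul_comm]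
    have h3 := trace_mul_proj_le (Matrix.posSemidef_self_mul_conjTranspose X) hQ1 hQ2
    rw [h1, h2]
    calc ((X * Xᴴ) * (W * Wᴴ)).trace.re ≤ (X * Xᴴ).trace.re := h3
      _ = (Xᴴ * X).trace.re := by rw [Matrix.trace_mul_comm]
  have hK : (Kᴴ * K).trace = (Yᴴ * Y).trace := by
    have h1 : Kᴴ * K = (star U * (Yᴴ * Y)) * U := by
      simp only [hKdef, conjTranspose_mul, Matrix.star_eq_conjTranspose, mul_assoc]
    rw [h1, Matrix.trace_mul_comm, ← mul_assoc, hU2, one_mul]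
  rw [htr]
  calc (Gᴴ * K).trace.re
      ≤ Real.sqrt (Gᴴ * G).trace.re * Real.sqrt (Kᴴ * K).trace.re :=
        re_trace_conjTranspose_mul_le G K
    _ ≤ Real.sqrt (Xᴴ * X).trace.re * Real.sqrt (Yᴴ * Y).trace.re := by
        apply mul_le_mul (Real.sqrt_le_sqrt hG) (by rw [hK]) (Real.sqrt_nonneg _)
          (Real.sqrt_nonneg _)

lemma opNorm_nonneg' (M : Matrix (Fin d) (Fin d) ℂ) : 0 ≤ opNorm M := norm_nonneg _

lemma opNorm_conjTranspose (M : Matrix (Fin d) (Fin d) ℂ) : opNorm Mᴴ = opNorm M := by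
  rw [opNorm, opNorm, ← Matrix.star_eq_conjTranspose, map_star,
    ContinuousLinearMap.star_eq_adjoint]
  exact ContinuousLinearMap.adjoint.norm_map _

lemma opNorm_mulVec_le (M : Matrix (Fin d) (Fin d) ℂ) (x : Fin d → ℂ) :
    Real.sqrt (∑ i, ‖(M *ᵥ x) i‖ ^ 2) ≤ opNorm M * Real.sqrt (∑ i, ‖x i‖ ^ 2) := by
  have h := (Matrix.toEuclideanCLM (𝕜 := ℂ) M).le_opNorm ((WithLp.equiv 2 _).symm x)
  rw [show (WithLp.equiv 2 _).symm x = WithLp.toLp 2 x from rfl, Matrix.toEuclideanCLM_toLp] at h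
  rw [EuclideanSpace.norm_eq, EuclideanSpace.norm_eq] at h
  simpa [Matrix.toLin'_apply, opNorm] using h

lemma dot_self_eq (z : Fin d → ℂ) : star z ⬝ᵥ z = ((∑ i, ‖z i‖ ^ 2 : ℝ) : ℂ) := by
  rw [Complex.ofReal_sum]
  refine Finset.sum_congr rfl fun i _ => ?_
  rw [Pi.star_apply, Complex.star_def, ← Complex.normSq_eq_conj_mul_self]
  rw [Complex.sq_norm]

lemma smul_one_sub_self_mul_conjTranspose_posSemidef (M : Matrix (Fin d) (Fin d) ℂ) :
    ((((opNorm M : ℝ) ^ 2 : ℝ) : ℂ) • (1 : Matrix (Fin d) (Fin d) ℂ) - M * Mᴴ).PosSemidef := by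
  refine Matrix.PosSemidef.of_dotProduct_mulVec_nonneg ?_ ?_
  · unfold Matrix.IsHermitian
    rw [conjTranspose_sub, conjTranspose_smul, conjTranspose_one, conjTranspose_mul,
      conjTranspose_conjTranspose]
    congr 1
    rw [Complex.star_def, Complex.conj_ofReal]
  · intro x
    have hy : star x ᵥ* M = star (Mᴴ *ᵥ x) := by
      rw [Matrix.star_mulVec, conjTranspose_conjTranspose]
    have expand : star x ⬝ᵥ ((((opNorm M : ℝ) ^ 2 : ℝ) : ℂ) • (1 : Matrix (Fin d) (Fin d) ℂ)
          - M * Mᴴ) *ᵥ x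
        = (((opNorm M) ^ 2 : ℝ) : ℂ) * (star x ⬝ᵥ x) - star (Mᴴ *ᵥ x) ⬝ᵥ (Mᴴ *ᵥ x) := by
      rw [Matrix.sub_mulVec, dotProduct_sub, Matrix.smul_mulVec,
        Matrix.one_mulVec, dotProduct_smul, ← Matrix.mulVec_mulVec,
        Matrix.dotProduct_mulVec, hy]
      simp [smul_eq_mul]
    rw [expand, dot_self_eq, dot_self_eq, ← Complex.ofReal_mul, ← Complex.ofReal_sub]
    rw [Complex.zero_le_real]
    have h := opNorm_mulVec_le Mᴴ x
    rw [opNorm_conjTranspose] at h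
    have h1 : 0 ≤ ∑ i, ‖x i‖ ^ 2 := Finset.sum_nonneg fun i _ => sq_nonneg _
    have h2 : 0 ≤ ∑ i, ‖(Mᴴ *ᵥ x) i‖ ^ 2 := Finset.sum_nonneg fun i _ => sq_nonneg _
    have h3 := mul_self_le_mul_self (Real.sqrt_nonneg (∑ i, ‖(Mᴴ *ᵥ x) i‖ ^ 2)) h
    nlinarith [Real.sq_sqrt h1, Real.sq_sqrt h2, Real.sqrt_nonneg (∑ i, ‖x i‖ ^ 2),
      opNorm_nonneg' M]

end Aux

/-- For a density matrix `ρ` with block decomposition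
`ρ = [[A, B],[B†, D]]` w.r.t. a projection `P`, with `W = Tr D` and
`λ = ‖(√A)^g B (√D)^g‖_∞` (where `(·)^g` is the Moore–Penrose generalized inverse,
characterized here by the four Penrose conditions), one has `‖B‖₁ ≤ λ √W`. -/
theorem traceNorm_offdiag_block_le {d : ℕ}
    (ρ P : Matrix (Fin d) (Fin d) ℂ)
    (hρ : ρ.PosSemidef) (hρtr : ρ.trace = 1)
    (hP1 : Pᴴ = P) (hP2 : P * P = P)
    (A B D : Matrix (Fin d) (Fin d) ℂ)
    (hA : A = P * ρ * P) (hB : B = P * ρ * (1 - P)) (hD : D = (1 - P) * ρ * (1 - P))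
    (hAps : A.PosSemidef) (hDps : D.PosSemidef)
    (Ag Dg : Matrix (Fin d) (Fin d) ℂ)
    -- `Ag` is the Moore–Penrose generalized inverse of `√A`:
    (hAg1 : hAps.sqrt * Ag * hAps.sqrt = hAps.sqrt)
    (hAg2 : Ag * hAps.sqrt * Ag = Ag)
    (hAg3 : (hAps.sqrt * Ag)ᴴ = hAps.sqrt * Ag)
    (hAg4 : (Ag * hAps.sqrt)ᴴ = Ag * hAps.sqrt)
    -- `Dg` is the Moore–Penrose generalized inverse of `√D`:
    (hDg1 : hDps.sqrt * Dg * hDps.sqrt = hDps.sqrt)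
    (hDg2 : Dg * hDps.sqrt * Dg = Dg)
    (hDg3 : (hDps.sqrt * Dg)ᴴ = hDps.sqrt * Dg)
    (hDg4 : (Dg * hDps.sqrt)ᴴ = Dg * hDps.sqrt) :
    traceNorm B ≤ opNorm (Ag * B * Dg) * Real.sqrt D.trace.re := by
  classical
  set sA := hAps.sqrt with hsA
  set sD := hDps.sqrt with hsD
  set M := Ag * B * Dg with hM
  set c := opNorm M with hc
  have hsAh : sAᴴ = sA := hAps.posSemidef_sqrt.1
  have hsDh : sDᴴ = sD := hDps.posSemidef_sqrt.1
  have hsρh : hρ.sqrtᴴ = hρ.sqrt := hρ.posSemidef_sqrt.1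
  have h1P : (1 - P)ᴴ = 1 - P := by rw [conjTranspose_sub, conjTranspose_one, hP1]
  have hAA : sA * sA = A := hAps.sqrt_mul_self
  have hDD : sD * sD = D := hDps.sqrt_mul_self
  set X := P * hρ.sqrt with hX
  set Y := hρ.sqrt * (1 - P) with hY
  have hXY : X * Y = B := by
    rw [hX, hY, hB, mul_assoc, ← mul_assoc hρ.sqrt hρ.sqrt (1 - P), hρ.sqrt_mul_self,
      ← mul_assoc]
  have hXX : X * Xᴴ = A := by
    rw [hX, conjTranspose_mul, hsρh, hP1, hA, mul_assoc,
      ← mul_assoc hρ.sqrt hρ.sqrt P, hρ.sqrt_mul_self, ← mul_assoc]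
  have hYY : Yᴴ * Y = D := by
    rw [hY, conjTranspose_mul, hsρh, h1P, hD, mul_assoc,
      ← mul_assoc hρ.sqrt hρ.sqrt (1 - P), hρ.sqrt_mul_self, ← mul_assoc]
  -- projection onto range of sA
  have hPAA : (sA * Ag) * A = A := by
    calc (sA * Ag) * A = (sA * Ag) * (sA * sA) := by rw [hAA]
      _ = (sA * Ag * sA) * sA := by simp only [mul_assoc]
      _ = sA * sA := by rw [hAg1]
      _ = A := hAA
  have hAPA : A * (sA * Ag) = A := by
    have h := congrArg conjTranspose hPAA
    rwa [conjTranspose_mul, hAg3, hAps.1] at h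
  have hPAX : (sA * Ag) * X = X := by
    have key : ((sA * Ag) * X - X) * ((sA * Ag) * X - X)ᴴ = 0 := by
      rw [conjTranspose_sub, conjTranspose_mul, hAg3, sub_mul, mul_sub, mul_sub]
      have e1 : (sA * Ag) * X * (Xᴴ * (sA * Ag)) = A := by
        rw [show (sA * Ag) * X * (Xᴴ * (sA * Ag)) = (sA * Ag) * (X * Xᴴ) * (sA * Ag) by
          simp only [mul_assoc], hXX, hPAA, hAPA]
      have e2 : (sA * Ag) * X * Xᴴ = A := by rw [mul_assoc, hXX, hPAA]
      have e3 : X * (Xᴴ * (sA * Ag)) = A := by rw [← mul_assoc, hXX, hAPA]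
      rw [e1, e2, e3, hXX]
      simp
    have hz := Matrix.self_mul_conjTranspose_eq_zero.mp key
    exact sub_eq_zero.mp hz
  -- projection onto range of sD
  have hDQ : D * (Dg * sD) = D := by
    calc D * (Dg * sD) = (sD * sD) * (Dg * sD) := by rw [hDD]
      _ = sD * (sD * Dg * sD) := by simp only [mul_assoc]
      _ = sD * sD := by rw [hDg1]
      _ = D := hDD
  have hQDD : (Dg * sD) * D = D := by
    have h := congrArg conjTranspose hDQ
    rwa [conjTranspose_mul, hDg4, hDps.1] at h
  have hYQ : Y * (Dg * sD) = Y := by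
    have key : (Y * (Dg * sD) - Y)ᴴ * (Y * (Dg * sD) - Y) = 0 := by
      rw [conjTranspose_sub, conjTranspose_mul, hDg4, sub_mul, mul_sub, mul_sub]
      have e1 : (Dg * sD) * Yᴴ * (Y * (Dg * sD)) = D := by
        rw [show (Dg * sD) * Yᴴ * (Y * (Dg * sD)) = (Dg * sD) * (Yᴴ * Y) * (Dg * sD) by
          simp only [mul_assoc], hYY, hQDD, hDQ]
      have e2 : (Dg * sD) * Yᴴ * Y = D := by rw [mul_assoc, hYY, hQDD]
      have e3 : Yᴴ * (Y * (Dg * sD)) = D := by rw [← mul_assoc, hYY, hDQ]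
      rw [e1, e2, e3, hYY]
      simp
    have hz := Matrix.conjTranspose_mul_self_eq_zero.mp key
    exact sub_eq_zero.mp hz
  -- factorization B = (sA * M) * sD
  have hBfact : (sA * M) * sD = B := by
    rw [hM]
    conv_rhs => rw [← hXY, ← hPAX, ← hYQ]
    rw [← hXY]
    simp only [mul_assoc]
  -- the trace identity
  have hTtr : ((sA * M)ᴴ * (sA * M)).trace = (A * (M * Mᴴ)).trace := by
    rw [conjTranspose_mul, hsAh]
    have e1 : (Mᴴ * sA) * (sA * M) = Mᴴ * (A * M) := by
      calc (Mᴴ * sA) * (sA * M) = Mᴴ * ((sA * sA) * M) := by simp only [mul_assoc]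
        _ = Mᴴ * (A * M) := by rw [hAA]
    rw [e1, Matrix.trace_mul_comm, mul_assoc]
  -- trace bound via operator norm
  have hMM : (A * (M * Mᴴ)).trace.re ≤ c ^ 2 * A.trace.re := by
    have hpsd := smul_one_sub_self_mul_conjTranspose_posSemidef M
    have hconj := hpsd.mul_mul_conjTranspose_same sA
    rw [hsAh] at hconj
    have hnn := re_trace_nonneg hconj
    have hexp : sA * ((((opNorm M : ℝ) ^ 2 : ℝ) : ℂ) • (1 : Matrix (Fin d) (Fin d) ℂ)
          - M * Mᴴ) * sA
        = (((opNorm M : ℝ) ^ 2 : ℝ) : ℂ) • (sA * sA) - sA * (M * Mᴴ) * sA := by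
      rw [mul_sub, sub_mul, mul_smul_comm, smul_mul_assoc, mul_one]
    rw [hexp] at hnn
    have htr2 : (sA * (M * Mᴴ) * sA).trace = (A * (M * Mᴴ)).trace := by
      rw [Matrix.trace_mul_cycle, hAA]
    rw [Matrix.trace_sub, Matrix.trace_smul, htr2, hAA, Complex.sub_re, smul_eq_mul,
      Complex.re_ofReal_mul] at hnn
    rw [hc]
    linarith
  -- trace A ≤ 1
  have htrA1 : A.trace.re ≤ 1 := by
    have hAtr : A.trace = (P * ρ).trace := by
      rw [hA, Matrix.trace_mul_cycle, hP2]
    have h1proj : (1 - P) * (1 - P) = 1 - P := by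
      simp [mul_sub, sub_mul, hP2]
    have hDtr : D.trace = ((1 - P) * ρ).trace := by
      rw [hD, Matrix.trace_mul_cycle, h1proj]
    have hsum : A.trace + D.trace = 1 := by
      rw [hAtr, hDtr, ← Matrix.trace_add, ← add_mul]
      have : P + (1 - P) = (1 : Matrix (Fin d) (Fin d) ℂ) := by abel
      rw [this, one_mul, hρtr]
    have hre := congrArg Complex.re hsum
    rw [Complex.add_re, Complex.one_re] at hre
    have := re_trace_nonneg hDps
    linarith
  -- final assembly
  have happly := traceNorm_mul_le (sA * M) sD
  rw [hBfact] at happly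
  have hsDD : sDᴴ * sD = D := by rw [hsDh, hDD]
  rw [hsDD] at happly
  have h1 : Real.sqrt (((sA * M)ᴴ * (sA * M)).trace.re) ≤ c := by
    have e : ((sA * M)ᴴ * (sA * M)).trace.re ≤ c ^ 2 := by
      rw [hTtr]
      calc (A * (M * Mᴴ)).trace.re ≤ c ^ 2 * A.trace.re := hMM
        _ ≤ c ^ 2 * 1 := mul_le_mul_of_nonneg_left htrA1 (sq_nonneg c)
        _ = c ^ 2 := mul_one _
    calc Real.sqrt (((sA * M)ᴴ * (sA * M)).trace.re) ≤ Real.sqrt (c ^ 2) :=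
        Real.sqrt_le_sqrt e
      _ = c := Real.sqrt_sq (opNorm_nonneg' M)
  calc traceNorm B
      ≤ Real.sqrt (((sA * M)ᴴ * (sA * M)).trace.re) * Real.sqrt (D.trace.re) := happly
    _ ≤ c * Real.sqrt (D.trace.re) := mul_le_mul_of_nonneg_right h1 (Real.sqrt_nonneg _)
end

section
/- Cross-click probability formula: for t ∈ [0,1] and nonnegative integers m ≤ n, ∑_{(a,b): 0≤a≤n−m, 0≤b≤m, a+b≠0, a+b≠n} C(m,b) C(n−m,a) t^{a+b} (1−t)^{n−a−b} (1/2)^{a+b} (2^{a+b} − (3/2)^{a+b}) = 1 − t^n − (1 − t/4)^n + (3t/4)^n. In particular the value is independent of m. -/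
open Finset

lemma cross_key (x y : ℝ) (n m : ℕ) (hmn : m ≤ n) :
    ∑ p ∈ Finset.range (n - m + 1) ×ˢ Finset.range (m + 1),
      (m.choose p.2 : ℝ) * ((n - m).choose p.1 : ℝ) * x ^ (p.1 + p.2) *
        y ^ (n - p.1 - p.2) = (x + y) ^ n := by
  rw [Finset.sum_product]
  have h : ∀ a ∈ Finset.range (n - m + 1), ∀ b ∈ Finset.range (m + 1),
      (m.choose b : ℝ) * ((n - m).choose a : ℝ) * x ^ (a + b) * y ^ (n - a - b)
      = ((n - m).choose a * x ^ a * y ^ (n - m - a)) *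
        ((m.choose b : ℝ) * x ^ b * y ^ (m - b)) := by
    intro a ha b hb
    simp only [Finset.mem_range] at ha hb
    have : n - a - b = (n - m - a) + (m - b) := by omega
    rw [this, pow_add, pow_add]
    ring
  calc ∑ a ∈ Finset.range (n - m + 1), ∑ b ∈ Finset.range (m + 1),
        (m.choose b : ℝ) * ((n - m).choose a : ℝ) * x ^ (a + b) * y ^ (n - a - b)
      = ∑ a ∈ Finset.range (n - m + 1), ∑ b ∈ Finset.range (m + 1),
        (((n - m).choose a : ℝ) * x ^ a * y ^ (n - m - a)) *
        ((m.choose b : ℝ) * x ^ b * y ^ (m - b)) := by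
        exact Finset.sum_congr rfl fun a ha => Finset.sum_congr rfl fun b hb => h a ha b hb
    _ = (∑ a ∈ Finset.range (n - m + 1), ((n - m).choose a : ℝ) * x ^ a * y ^ (n - m - a)) *
        (∑ b ∈ Finset.range (m + 1), (m.choose b : ℝ) * x ^ b * y ^ (m - b)) := by
        rw [Finset.sum_mul_sum]
    _ = (x + y) ^ (n - m) * (x + y) ^ m := by
        rw [add_pow, add_pow]
        congr 1 <;> exact Finset.sum_congr rfl fun k hk => by ring
    _ = (x + y) ^ n := by rw [← pow_add, Nat.sub_add_cancel hmn]

/-- Cross-click probability formula: for `t ∈ [0,1]` and `m ≤ n`,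
`∑_{(a,b): a+b≠0, a+b≠n} C(m,b) C(n−m,a) t^{a+b} (1−t)^{n−a−b} (1/2)^{a+b}
(2^{a+b} − (3/2)^{a+b}) = 1 − t^n − (1 − t/4)^n + (3t/4)^n`;
in particular the value is independent of `m`. -/
theorem cross_click_probability (t : ℝ) (ht0 : 0 ≤ t) (ht1 : t ≤ 1)
    (n m : ℕ) (hmn : m ≤ n) :
    ∑ x ∈ (Finset.range (n - m + 1) ×ˢ Finset.range (m + 1)).filter
        (fun x => x.1 + x.2 ≠ 0 ∧ x.1 + x.2 ≠ n),
      (m.choose x.2 : ℝ) * ((n - m).choose x.1 : ℝ) * t ^ (x.1 + x.2) *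
        (1 - t) ^ (n - x.1 - x.2) * (1 / 2 : ℝ) ^ (x.1 + x.2) *
        ((2 : ℝ) ^ (x.1 + x.2) - (3 / 2 : ℝ) ^ (x.1 + x.2)) =
    1 - t ^ n - (1 - t / 4) ^ n + (3 * t / 4) ^ n := by
  set f : ℕ × ℕ → ℝ := fun x =>
      (m.choose x.2 : ℝ) * ((n - m).choose x.1 : ℝ) * t ^ (x.1 + x.2) *
        (1 - t) ^ (n - x.1 - x.2) * (1 / 2 : ℝ) ^ (x.1 + x.2) *
        ((2 : ℝ) ^ (x.1 + x.2) - (3 / 2 : ℝ) ^ (x.1 + x.2)) with hf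
  set s := Finset.range (n - m + 1) ×ˢ Finset.range (m + 1) with hs
  have hsplit := Finset.sum_filter_add_sum_filter_not s
      (fun x => x.1 + x.2 ≠ 0 ∧ x.1 + x.2 ≠ n) f
  -- complement set
  have hcompl : s.filter (fun x => ¬(x.1 + x.2 ≠ 0 ∧ x.1 + x.2 ≠ n)) =
      insert ((0 : ℕ), (0 : ℕ)) {((n - m : ℕ), m)} := by
    ext ⟨a, b⟩
    simp only [Finset.mem_filter, Finset.mem_insert, Finset.mem_singleton, hs,
      Finset.mem_product, Finset.mem_range, Prod.mk.injEq, not_and_or, not_ne_iff]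
    constructor
    · rintro ⟨⟨ha, hb⟩, h0 | hn⟩
      · left; omega
      · right; omega
    · rintro (⟨rfl, rfl⟩ | ⟨rfl, rfl⟩)
      · exact ⟨⟨by omega, by omega⟩, Or.inl rfl⟩
      · exact ⟨⟨by omega, by omega⟩, Or.inr (by omega)⟩
  have hf00 : f (0, 0) = 0 := by simp [hf]
  have hcsum : ∑ x ∈ s.filter (fun x => ¬(x.1 + x.2 ≠ 0 ∧ x.1 + x.2 ≠ n)), f x
      = f (n - m, m) := by
    rw [hcompl, Finset.sum_insert_of_eq_zero_if_notMem (fun _ => hf00),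
      Finset.sum_singleton]
  -- total sum
  have hkey1 := cross_key t (1 - t) n m hmn
  have hkey2 := cross_key (3 * t / 4) (1 - t) n m hmn
  have htot : ∑ x ∈ s, f x = 1 - (1 - t / 4) ^ n := by
    have : ∑ x ∈ s, f x =
        (∑ p ∈ s, (m.choose p.2 : ℝ) * ((n - m).choose p.1 : ℝ) * t ^ (p.1 + p.2) *
          (1 - t) ^ (n - p.1 - p.2)) -
        (∑ p ∈ s, (m.choose p.2 : ℝ) * ((n - m).choose p.1 : ℝ) *
          (3 * t / 4) ^ (p.1 + p.2) * (1 - t) ^ (n - p.1 - p.2)) := by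
      rw [← Finset.sum_sub_distrib]
      refine Finset.sum_congr rfl fun p hp => ?_
      have h1 : ((1 : ℝ) / 2) ^ (p.1 + p.2) * (2 : ℝ) ^ (p.1 + p.2) = 1 := by
        rw [← mul_pow]; norm_num
      have h2 : ((1 : ℝ) / 2) ^ (p.1 + p.2) * ((3 : ℝ) / 2) ^ (p.1 + p.2)
          = (3 / 4 : ℝ) ^ (p.1 + p.2) := by
        rw [← mul_pow]; norm_num
      have h3 : (3 * t / 4 : ℝ) ^ (p.1 + p.2) = (3 / 4 : ℝ) ^ (p.1 + p.2) * t ^ (p.1 + p.2) := by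
        rw [← mul_pow]; ring_nf
      rw [hf]
      simp only
      rw [mul_sub]
      linear_combination ((m.choose p.2 : ℝ) * ((n - m).choose p.1 : ℝ) *
          t ^ (p.1 + p.2) * (1 - t) ^ (n - p.1 - p.2)) * h1 -
        ((m.choose p.2 : ℝ) * ((n - m).choose p.1 : ℝ) *
          t ^ (p.1 + p.2) * (1 - t) ^ (n - p.1 - p.2)) * h2
    rw [this, hkey1, hkey2]
    ring_nf
  -- corner value
  have hcorner : f (n - m, m) = t ^ n - (3 * t / 4) ^ n := by
    have hnm : n - m + m = n := Nat.sub_add_cancel hmn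
    have hz : n - (n - m) - m = 0 := by omega
    have h1 : ((1:ℝ) / 2) ^ n * (2 : ℝ) ^ n = 1 := by rw [← mul_pow]; norm_num
    have h2 : ((1:ℝ) / 2) ^ n * ((3:ℝ) / 2) ^ n = (3 / 4 : ℝ) ^ n := by
      rw [← mul_pow]; norm_num
    rw [hf]
    simp only [hnm, hz, Nat.choose_self, pow_zero, Nat.cast_one, one_mul, mul_one]
    linear_combination t ^ n * h1 - t ^ n * h2
  have : ∑ x ∈ s.filter (fun x => x.1 + x.2 ≠ 0 ∧ x.1 + x.2 ≠ n), f x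
      = (1 - (1 - t / 4) ^ n) - (t ^ n - (3 * t / 4) ^ n) := by
    rw [← htot, ← hsplit, hcsum, hcorner]; ring
  rw [this]; ring
end

section
/- Monotonicity of cross-click probability: define f(n) = 1 − t^n − (1 − t/4)^n + (3t/4)^n for t ∈ [0,1]. Then f(n+1) − f(n) ≥ (t^n − (3t/4)^n)(1−t) ≥ 0 for every nonnegative integer n, so f is monotonically nondecreasing in n. -/
/-- Monotonicity of cross-click probability: for
`f(n) = 1 − t^n − (1 − t/4)^n + (3t/4)^n` with `t ∈ [0,1]`, one has
`f(n+1) − f(n) ≥ (t^n − (3t/4)^n)(1−t) ≥ 0` for every `n`, so `f` is monotone. -/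
theorem cross_click_monotone (t : ℝ) (ht0 : 0 ≤ t) (ht1 : t ≤ 1)
    (f : ℕ → ℝ)
    (hf : ∀ n, f n = 1 - t ^ n - (1 - t / 4) ^ n + (3 * t / 4) ^ n) :
    (∀ n : ℕ, (t ^ n - (3 * t / 4) ^ n) * (1 - t) ≤ f (n + 1) - f n ∧
      0 ≤ (t ^ n - (3 * t / 4) ^ n) * (1 - t)) ∧
    Monotone f := by
  have h3t : (0:ℝ) ≤ 3 * t / 4 := by linarith
  have key : ∀ n : ℕ, (t ^ n - (3 * t / 4) ^ n) * (1 - t) ≤ f (n + 1) - f n ∧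
      0 ≤ (t ^ n - (3 * t / 4) ^ n) * (1 - t) := by
    intro n
    have h1 : (3 * t / 4) ^ n ≤ t ^ n := pow_le_pow_left₀ h3t (by linarith) n
    have h2 : (3 * t / 4) ^ n ≤ (1 - t / 4) ^ n := pow_le_pow_left₀ h3t (by linarith) n
    constructor
    · rw [hf, hf, pow_succ t, pow_succ (1 - t / 4), pow_succ (3 * t / 4)]
      nlinarith [mul_le_mul_of_nonneg_left h2 ht0]
    · exact mul_nonneg (by linarith) (by linarith)
  refine ⟨key, monotone_nat_of_le_succ fun n => ?_⟩
  have := key n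
  linarith [this.1, this.2]
end
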